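/- Let F(X,Y) = s^{-p}X^p - s^{-1}X + t·s^{-p}Y^p - s^{-1} over a valued field (L, w) of characteristic p containing elements s, t with w(s) > 0, and suppose G(X_0, X_1) = X_0^p - X_0 + tX_1^p - s^{-1} satisfies w(G(x_0, x_1)) < 0 for all x_0, x_1 ∈ L. If additionally there are elements a_k, b_k ∈ L with s·a_k, s·b_k ∈ O_w and w(G(a_k, b_k)) = -(1/p^k)·w(s), then the set {w(F(a,b)) : a, b ∈ O_w} is a cofinal subset of the negative part of the value group and hence has no maximal element; in particular (L, w) is not extremal. -/

import Mathlib

/-- A valued field is *extremal* if every multivariable polynomial attains a maximal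
value on tuples from the valuation ring. -/
def IsExtremal {K Γ : Type*} [Field K] [AddCommGroup Γ] [LinearOrder Γ] [IsOrderedAddMonoid Γ]
    (v : AddValuation K (WithTop Γ)) : Prop :=
  ∀ (n : ℕ) (F : MvPolynomial (Fin n) K), ∃ a : Fin n → K,
    (∀ i, 0 ≤ v (a i)) ∧ ∀ b : Fin n → K, (∀ i, 0 ≤ v (b i)) →
      v (MvPolynomial.eval b F) ≤ v (MvPolynomial.eval a F)

/-- For `F(X,Y) = s^{-p}X^p - s^{-1}X + t·s^{-p}Y^p - s^{-1}` over a valued field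
`(L, w)` of characteristic `p` with `w s > 0`: if
`G(X₀,X₁) = X₀^p - X₀ + tX₁^p - s⁻¹` has `w (G x₀ x₁) < 0` for all `x₀ x₁ ∈ L`, and
there are `a k`, `b k` with `s·(a k), s·(b k) ∈ O_w` and
`w (G (a k) (b k)) = -(1/p^k)·w s`, then the values of `F` on the valuation ring all
lie in the negative part of the value group and form a cofinal subset of it; hence
they have no maximal element and `(L, w)` is not extremal. -/
theorem not_extremal_of_cofinal_values {L : Type*} [Field L]
    (p : ℕ) (hp : p.Prime) [CharP L p]
    (w : AddValuation L (WithTop ℚ)) (s t : L)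
    (σ : ℚ) (hσ : 0 < σ) (hws : w s = (σ : WithTop ℚ))
    (hG : ∀ x₀ x₁ : L, w (x₀ ^ p - x₀ + t * x₁ ^ p - s⁻¹) < 0)
    (a b : ℕ → L)
    (hmem : ∀ k, 0 ≤ w (s * a k) ∧ 0 ≤ w (s * b k))
    (hval : ∀ k, w (a k ^ p - a k + t * b k ^ p - s⁻¹)
      = ((-(1 / p ^ k) * σ : ℚ) : WithTop ℚ)) :
    (∀ x y : L, 0 ≤ w x → 0 ≤ w y →
      w (s⁻¹ ^ p * x ^ p - s⁻¹ * x + t * s⁻¹ ^ p * y ^ p - s⁻¹) < 0) ∧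
    (∀ γ : ℚ, γ < 0 → ∃ x y : L, 0 ≤ w x ∧ 0 ≤ w y ∧
      (γ : WithTop ℚ) ≤ w (s⁻¹ ^ p * x ^ p - s⁻¹ * x + t * s⁻¹ ^ p * y ^ p - s⁻¹)) ∧
    (∀ x y : L, 0 ≤ w x → 0 ≤ w y → ∃ x' y' : L, 0 ≤ w x' ∧ 0 ≤ w y' ∧
      w (s⁻¹ ^ p * x ^ p - s⁻¹ * x + t * s⁻¹ ^ p * y ^ p - s⁻¹) <
        w (s⁻¹ ^ p * x' ^ p - s⁻¹ * x' + t * s⁻¹ ^ p * y' ^ p - s⁻¹)) ∧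
    ¬IsExtremal w := by
  have hs0 : s ≠ 0 := by
    intro h
    rw [h, AddValuation.map_zero] at hws
    exact (WithTop.coe_ne_top hws.symm).elim
  -- F(x,y) = G(s⁻¹x, s⁻¹y)
  have key : ∀ x y : L, s⁻¹ ^ p * x ^ p - s⁻¹ * x + t * s⁻¹ ^ p * y ^ p - s⁻¹
      = (s⁻¹ * x) ^ p - (s⁻¹ * x) + t * (s⁻¹ * y) ^ p - s⁻¹ := by
    intro x y; ring
  have part1 : ∀ x y : L, 0 ≤ w x → 0 ≤ w y →
      w (s⁻¹ ^ p * x ^ p - s⁻¹ * x + t * s⁻¹ ^ p * y ^ p - s⁻¹) < 0 := by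
    intro x y _ _
    rw [key]; exact hG _ _
  have part2 : ∀ γ : ℚ, γ < 0 → ∃ x y : L, 0 ≤ w x ∧ 0 ≤ w y ∧
      (γ : WithTop ℚ) ≤ w (s⁻¹ ^ p * x ^ p - s⁻¹ * x + t * s⁻¹ ^ p * y ^ p - s⁻¹) := by
    intro γ hγ
    have hp1 : (1 : ℚ) < (p : ℚ) := by exact_mod_cast hp.one_lt
    obtain ⟨k, hk⟩ := pow_unbounded_of_one_lt (σ / (-γ)) hp1
    refine ⟨s * a k, s * b k, (hmem k).1, (hmem k).2, ?_⟩
    have hxa : s⁻¹ * (s * a k) = a k := by field_simp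
    have hyb : s⁻¹ * (s * b k) = b k := by field_simp
    rw [key, hxa, hyb, hval k]
    rw [WithTop.coe_le_coe]
    have hpk : (0 : ℚ) < (p : ℚ) ^ k := by positivity
    have : σ / (-γ) < (p : ℚ) ^ k := hk
    have h1 : σ < -γ * (p : ℚ) ^ k := by
      rw [mul_comm]; rwa [div_lt_iff₀ (by linarith)] at this
    have : σ / (p : ℚ) ^ k < -γ := by
      rw [div_lt_iff₀ hpk]; linarith [h1]
    have heq : -(1 / (p : ℚ) ^ k) * σ = -(σ / (p : ℚ) ^ k) := by ring
    rw [heq]; linarith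
  have part3 : ∀ x y : L, 0 ≤ w x → 0 ≤ w y → ∃ x' y' : L, 0 ≤ w x' ∧ 0 ≤ w y' ∧
      w (s⁻¹ ^ p * x ^ p - s⁻¹ * x + t * s⁻¹ ^ p * y ^ p - s⁻¹) <
        w (s⁻¹ ^ p * x' ^ p - s⁻¹ * x' + t * s⁻¹ ^ p * y' ^ p - s⁻¹) := by
    intro x y hx hy
    have h1 := part1 x y hx hy
    have hne : w (s⁻¹ ^ p * x ^ p - s⁻¹ * x + t * s⁻¹ ^ p * y ^ p - s⁻¹) ≠ ⊤ :=
      ne_top_of_lt (lt_of_lt_of_le h1 le_top)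
    obtain ⟨γ, hγ⟩ := WithTop.ne_top_iff_exists.mp hne
    have hγ0 : γ < 0 := by
      rw [← hγ] at h1
      exact_mod_cast h1
    obtain ⟨x', y', hx', hy', hle⟩ := part2 (γ / 2) (by linarith)
    refine ⟨x', y', hx', hy', ?_⟩
    rw [← hγ]
    calc (γ : WithTop ℚ) < ((γ / 2 : ℚ) : WithTop ℚ) := by
            rw [WithTop.coe_lt_coe]; linarith
      _ ≤ _ := hle
  refine ⟨part1, part2, part3, ?_⟩
  intro hext
  set F : MvPolynomial (Fin 2) L :=
    MvPolynomial.C (s⁻¹ ^ p) * MvPolynomial.X 0 ^ p - MvPolynomial.C s⁻¹ * MvPolynomial.X 0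
      + MvPolynomial.C (t * s⁻¹ ^ p) * MvPolynomial.X 1 ^ p - MvPolynomial.C s⁻¹ with hF
  have heval : ∀ c : Fin 2 → L, MvPolynomial.eval c F
      = s⁻¹ ^ p * (c 0) ^ p - s⁻¹ * (c 0) + t * s⁻¹ ^ p * (c 1) ^ p - s⁻¹ := by
    intro c
    simp [hF, mul_assoc]
  obtain ⟨c, hc, hmax⟩ := hext 2 F
  obtain ⟨x', y', hx', hy', hlt⟩ := part3 (c 0) (c 1) (hc 0) (hc 1)
  have := hmax ![x', y'] (by
    intro i
    fin_cases i <;> simpa using (by assumption : _))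
  rw [heval, heval] at this
  simp only [Matrix.cons_val_zero, Matrix.cons_val_one, Matrix.head_cons] at this
  exact absurd this (not_le.mpr hlt)
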